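/- Let f : [0,T] → [0,∞) be nonincreasing, M ≥ 1 a natural number, h = T/M, and for s ∈ [0,T] let ⌊s⌋_h = h·⌊s/h⌋. Then 2 ∫₀^T 1_{[⌊s⌋_h, ⌊s⌋_h + h/2]}(s) f(s) ds ≥ ∫₀^T f(s) ds. -/

import Mathlib

open MeasureTheory intervalIntegral Set

private lemma aux_ind_intble {f : ℝ → ℝ} {S : Set ℝ} (hS : MeasurableSet S) {a b : ℝ}
    (h : IntervalIntegrable f MeasureTheory.volume a b) :
    IntervalIntegrable (S.indicator f) MeasureTheory.volume a b :=
  ⟨h.1.indicator hS, h.2.indicator hS⟩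

theorem stmt_16 (T : ℝ) (hT : 0 < T) (M : ℕ) (hM : 1 ≤ M)
    (f : ℝ → ℝ) (hf0 : ∀ s ∈ Set.Icc (0:ℝ) T, 0 ≤ f s)
    (hmono : AntitoneOn f (Set.Icc (0:ℝ) T))
    (hint : IntervalIntegrable f MeasureTheory.volume 0 T) :
    2 * ∫ s in (0:ℝ)..T,
        (if s ∈ Set.Icc ((T / M) * ⌊s / (T / M)⌋) ((T / M) * ⌊s / (T / M)⌋ + (T / M) / 2)
          then f s else 0) ≥
      ∫ s in (0:ℝ)..T, f s := by
  have hMpos : (0:ℝ) < (M:ℝ) := by exact_mod_cast hM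
  set h : ℝ := T / M with hhdef
  have hh : 0 < h := div_pos hT hMpos
  have hMh : (M:ℝ) * h = T := by rw [hhdef]; field_simp [hMpos.ne']
  set g : ℝ → ℝ := fun s =>
    if s ∈ Set.Icc (h * ⌊s / h⌋) (h * ⌊s / h⌋ + h / 2) then f s else 0 with hgdef
  -- g as indicator of a measurable set
  set S : Set ℝ := {s : ℝ | s ≤ h * ⌊s / h⌋ + h / 2} with hSdef
  have hSmeas : MeasurableSet S := by
    have hF : Measurable fun s : ℝ => h * (⌊s / h⌋ : ℝ) + h / 2 := by
      have : Measurable fun s : ℝ => (⌊s / h⌋ : ℝ) :=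
        measurable_from_top.comp ((measurable_id.div_const h).floor)
      exact (this.const_mul h).add_const _
    exact measurableSet_le measurable_id hF
  have hg_eq : g = S.indicator f := by
    funext s
    have hfl : h * (⌊s / h⌋ : ℝ) ≤ s := by
      have := Int.floor_le (s / h)
      calc h * (⌊s / h⌋ : ℝ) ≤ h * (s / h) := by nlinarith
        _ = s := by field_simp
    simp only [hgdef, hSdef, Set.indicator, Set.mem_Icc, Set.mem_setOf_eq]
    by_cases hc : s ≤ h * ⌊s / h⌋ + h / 2 <;> simp [hc, hfl]
  -- partition points
  set a : ℕ → ℝ := fun k => (k : ℝ) * h with hadef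
  have ha0 : a 0 = 0 := by simp [hadef]
  have haM : a M = T := by simp [hadef, hMh]
  have hamono : ∀ k l : ℕ, k ≤ l → a k ≤ a l := fun k l hkl => by
    have : (k:ℝ) ≤ l := by exact_mod_cast hkl
    exact mul_le_mul_of_nonneg_right this hh.le
  have hfint : ∀ c d : ℝ, 0 ≤ c → d ≤ T → c ∈ Set.Icc (0:ℝ) T → d ∈ Set.Icc (0:ℝ) T →
      IntervalIntegrable f MeasureTheory.volume c d := by
    intro c d _ _ hc hd
    exact hint.mono_set (Set.uIcc_subset_uIcc (by simpa [Set.uIcc_of_le hT.le] using hc)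
      (by simpa [Set.uIcc_of_le hT.le] using hd))
  have hmem : ∀ k : ℕ, k ≤ M → a k ∈ Set.Icc (0:ℝ) T := by
    intro k hk
    exact ⟨by positivity, by rw [← haM]; exact hamono k M hk⟩
  have hmemhalf : ∀ k : ℕ, k < M → a k + h / 2 ∈ Set.Icc (0:ℝ) T := by
    intro k hk
    constructor
    · have := (hmem k hk.le).1; linarith
    · have : a k + h / 2 ≤ a (k + 1) := by
        simp only [hadef]; push_cast; nlinarith
      have h2 := (hmem (k+1) hk).2
      linarith
  -- floor on subintervals
  have hfloor : ∀ (k : ℕ) (s : ℝ), a k ≤ s → s < a (k + 1) → ⌊s / h⌋ = (k : ℤ) := by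
    intro k s h1 h2
    rw [Int.floor_eq_iff]
    constructor
    · push_cast
      rw [le_div_iff₀ hh]
      simpa [hadef] using h1
    · push_cast
      rw [div_lt_iff₀ hh]
      simp only [hadef] at h2; push_cast at h2; linarith
  -- integrability of f and g on subintervals
  have hfk : ∀ k : ℕ, k < M → IntervalIntegrable f MeasureTheory.volume (a k) (a (k+1)) :=
    fun k hk => hfint _ _ (hmem k hk.le).1 (hmem (k+1) hk).2 (hmem k hk.le) (hmem (k+1) hk)
  have hfk1 : ∀ k : ℕ, k < M →
      IntervalIntegrable f MeasureTheory.volume (a k) (a k + h/2) :=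
    fun k hk => hfint _ _ (hmem k hk.le).1 (hmemhalf k hk).2 (hmem k hk.le) (hmemhalf k hk)
  have hfk2 : ∀ k : ℕ, k < M →
      IntervalIntegrable f MeasureTheory.volume (a k + h/2) (a (k+1)) :=
    fun k hk => hfint _ _ (hmemhalf k hk).1 (hmem (k+1) hk).2 (hmemhalf k hk) (hmem (k+1) hk)
  have hgk : ∀ c d : ℝ, IntervalIntegrable f MeasureTheory.volume c d →
      IntervalIntegrable g MeasureTheory.volume c d := by
    intro c d hcd; rw [hg_eq]; exact aux_ind_intble hSmeas hcd
  -- key per-interval computation: ∫ g over [a k, a (k+1)] = ∫ f over [a k, a k + h/2]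
  have hstep : ∀ k : ℕ, k < M →
      (∫ s in a k..a (k+1), g s) = ∫ s in a k..a k + h/2, f s := by
    intro k hk
    have hlt : a k + h / 2 < a (k + 1) := by
      simp only [hadef]; push_cast; nlinarith
    have e1 : (∫ s in a k..a k + h/2, g s) = ∫ s in a k..a k + h/2, f s := by
      apply integral_congr
      intro s hs
      rw [Set.uIcc_of_le (by linarith)] at hs
      have h1 : a k ≤ s := hs.1
      have h2 : s ≤ a k + h / 2 := hs.2
      have hfl := hfloor k s h1 (lt_of_le_of_lt h2 hlt)
      simp only [hgdef, hfl, Set.mem_Icc]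
      rw [if_pos ⟨by simpa [hadef, mul_comm] using h1, by
        push_cast; simpa [hadef, mul_comm] using h2⟩]
    have e2 : (∫ s in (a k + h/2)..(a (k+1)), g s) = 0 := by
      apply integral_zero_ae
      have hne : ∀ᵐ x ∂(MeasureTheory.volume : MeasureTheory.Measure ℝ), x ≠ a (k+1) := by
        rw [MeasureTheory.ae_iff]
        simpa using Real.volume_singleton
      filter_upwards [hne] with x hx hxmem
      rw [Set.uIoc_of_le hlt.le] at hxmem
      have h1 : a k + h / 2 < x := hxmem.1
      have h2 : x < a (k+1) := lt_of_le_of_ne hxmem.2 hx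
      have hfl := hfloor k x (by linarith [hh.le]) h2
      simp only [hgdef, hfl]
      rw [if_neg]
      rw [Set.mem_Icc]
      push_neg
      intro _
      simpa [hadef, mul_comm] using h1
    rw [← integral_add_adjacent_intervals (hgk _ _ (hfk1 k hk))
      (hgk _ _ (hfk2 k hk)), e1, e2, add_zero]
  -- per-interval inequality: ∫ f over second half ≤ ∫ f over first half
  have hineq : ∀ k : ℕ, k < M →
      (∫ s in (a k + h/2)..(a (k+1)), f s) ≤ ∫ s in a k..a k + h/2, f s := by
    intro k hk
    have hend : a (k+1) = a k + h / 2 + h / 2 := by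
      simp only [hadef]; push_cast; ring
    have hcomp : (∫ s in a k..a k + h/2, f (s + h/2)) = ∫ s in (a k + h/2)..(a (k+1)), f s := by
      rw [integral_comp_add_right, hend]
    rw [← hcomp]
    apply integral_mono_on (by linarith [hh.le])
    · have := (hfk2 k hk)
      have := this.comp_add_right (h/2)
      simpa [hend] using this
    · exact hfk1 k hk
    · intro x hx
      have hx1 : x ∈ Set.Icc (0:ℝ) T := by
        constructor
        · have := (hmem k hk.le).1; linarith [hx.1]
        · have := (hmemhalf k hk).2; linarith [hx.2]
      have hx2 : x + h/2 ∈ Set.Icc (0:ℝ) T := by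
        constructor
        · linarith [hx1.1, hh.le]
        · have := (hmem (k+1) hk).2
          have : x + h/2 ≤ a (k+1) := by rw [hend]; linarith [hx.2]
          linarith [(hmem (k+1) hk).2]
      exact hmono hx1 hx2 (by linarith [hh.le])
  -- sum everything up
  have hsumf : (∫ s in (0:ℝ)..T, f s) = ∑ k ∈ Finset.range M, ∫ s in a k..a (k+1), f s := by
    rw [sum_integral_adjacent_intervals (fun k hk => hfk k hk), ha0, haM]
  have hsumg : (∫ s in (0:ℝ)..T, g s) = ∑ k ∈ Finset.range M, ∫ s in a k..a (k+1), g s := by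
    rw [sum_integral_adjacent_intervals (fun k hk => hgk _ _ (hfk k hk)), ha0, haM]
  have hgoal : (∫ s in (0:ℝ)..T, f s) ≤ 2 * ∫ s in (0:ℝ)..T, g s := by
    rw [hsumf, hsumg, Finset.mul_sum]
    apply Finset.sum_le_sum
    intro k hk
    have hk' := Finset.mem_range.mp hk
    rw [hstep k hk',
      ← integral_add_adjacent_intervals (hfk1 k hk') (hfk2 k hk')]
    linarith [hineq k hk']
  exact hgoal
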